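/- Under unconfoundedness (Y_i(·) ⊥ D | 𝒞_i) and the exposure-mapping pinning condition (f(d_{N(i,K)}) = t' implies d_{N(i,K)} = δ_i for a fixed vector δ_i), the estimand τ(t,t') decomposes as τ(t,t') = τ*(t,t') + ℛ_n, where τ*(t,t') = (1/m_n) Σ_{i∈ℳ_n} Σ_{d∈{0,1}^n} E[Y_i(d) − Y_i(δ_i, d_{−N(i,K)}) | 𝒞_i] · P(D=d | T_i=t, 𝒞_i) and ℛ_n = (1/m_n) Σ_{i∈ℳ_n} Σ_{d∈{0,1}^n} E[Y_i(δ_i, d_{−N(i,K)}) | 𝒞_i] · (P(D=d | T_i=t, 𝒞_i) − P(D=d | T_i=t', 𝒞_i)). -/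

import Mathlib

open Finset
open scoped Classical

noncomputable section

/-- Probability of event `A` under mass function `p` on a finite space. -/
def prb {Ω : Type*} [Fintype Ω] (p : Ω → ℝ) (A : Ω → Prop) : ℝ :=
  ∑ ω, if A ω then p ω else 0

/-- Unnormalized expectation of `f` on the event `A`. -/
def eiv {Ω : Type*} [Fintype Ω] (p : Ω → ℝ) (f : Ω → ℝ) (A : Ω → Prop) : ℝ :=
  ∑ ω, if A ω then p ω * f ω else 0

/-- Expectation of `f`. -/
def expv {Ω : Type*} [Fintype Ω] (p : Ω → ℝ) (f : Ω → ℝ) : ℝ := ∑ ω, p ω * f ω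

/-- Conditional expectation of `f` given the event `A`. -/
def cexp {Ω : Type*} [Fintype Ω] (p : Ω → ℝ) (f : Ω → ℝ) (A : Ω → Prop) : ℝ :=
  eiv p f A / prb p A

/-- Conditional probability of `A` given `B`. -/
def cpr {Ω : Type*} [Fintype Ω] (p : Ω → ℝ) (A B : Ω → Prop) : ℝ :=
  prb p (fun ω => A ω ∧ B ω) / prb p B

/-- Real value of a boolean treatment. -/
def bR : Bool → ℝ := fun x => if x then 1 else 0

section Framework

variable {Ω : Type*} [Fintype Ω] {n : ℕ} {E : Type*}

/-- The assignment vector equal to `δ i` on the `K`-neighborhood `N i` and to `d` outside it: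
`(δᵢ, d₋N(i,K))`. -/
def pin (N : Fin n → Finset (Fin n)) (δ : Fin n → Fin n → Bool) (i : Fin n)
    (d : Fin n → Bool) : Fin n → Bool :=
  fun j => if j ∈ N i then δ i j else d j

/-- The exposure-mapping estimand
`τ(t,t') = (1/mₙ) Σ_{i∈ℳₙ} (E[Yᵢ | Tᵢ = t, 𝒞ᵢ] − E[Yᵢ | Tᵢ = t', 𝒞ᵢ])`,
where `Tᵢ = f(i, D)` and the event `C i` is the conditioning value of the controls `𝒞ᵢ`. -/
def tauE (p : Ω → ℝ) (Y : Fin n → (Fin n → Bool) → Ω → ℝ) (D : Ω → Fin n → Bool)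
    (C : Fin n → Ω → Prop) (f : Fin n → (Fin n → Bool) → E) (M : Finset (Fin n))
    (t t' : E) : ℝ :=
  (M.card : ℝ)⁻¹ * ∑ i ∈ M,
    (cexp p (fun ω => Y i (D ω) ω) (fun ω => f i (D ω) = t ∧ C i ω) -
     cexp p (fun ω => Y i (D ω) ω) (fun ω => f i (D ω) = t' ∧ C i ω))

/-- `τ*(t,t') = (1/mₙ) Σ_{i∈ℳₙ} Σ_d E[Yᵢ(d) − Yᵢ(δᵢ, d₋N(i,K)) | 𝒞ᵢ] · P(D = d | Tᵢ = t, 𝒞ᵢ)`. -/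
def tauStarE (p : Ω → ℝ) (Y : Fin n → (Fin n → Bool) → Ω → ℝ) (D : Ω → Fin n → Bool)
    (C : Fin n → Ω → Prop) (f : Fin n → (Fin n → Bool) → E) (M : Finset (Fin n))
    (N : Fin n → Finset (Fin n)) (δ : Fin n → Fin n → Bool) (t : E) : ℝ :=
  (M.card : ℝ)⁻¹ * ∑ i ∈ M, ∑ d : Fin n → Bool,
    cexp p (fun ω => Y i d ω - Y i (pin N δ i d) ω) (C i) *
      cpr p (fun ω => D ω = d) (fun ω => f i (D ω) = t ∧ C i ω)

/-- The bias term
`ℛₙ = (1/mₙ) Σ_{i∈ℳₙ} Σ_d E[Yᵢ(δᵢ, d₋N(i,K)) | 𝒞ᵢ] (P(D=d | Tᵢ=t, 𝒞ᵢ) − P(D=d | Tᵢ=t', 𝒞ᵢ))`. -/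
def RnE (p : Ω → ℝ) (Y : Fin n → (Fin n → Bool) → Ω → ℝ) (D : Ω → Fin n → Bool)
    (C : Fin n → Ω → Prop) (f : Fin n → (Fin n → Bool) → E) (M : Finset (Fin n))
    (N : Fin n → Finset (Fin n)) (δ : Fin n → Fin n → Bool) (t t' : E) : ℝ :=
  (M.card : ℝ)⁻¹ * ∑ i ∈ M, ∑ d : Fin n → Bool,
    cexp p (fun ω => Y i (pin N δ i d) ω) (C i) *
      (cpr p (fun ω => D ω = d) (fun ω => f i (D ω) = t ∧ C i ω) -
       cpr p (fun ω => D ω = d) (fun ω => f i (D ω) = t' ∧ C i ω))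

end Framework

section AuxLemmas

variable {Ω : Type*} [Fintype Ω]

lemma prb_congr (p : Ω → ℝ) {A A' : Ω → Prop} (h : ∀ ω, A ω ↔ A' ω) :
    prb p A = prb p A' := by
  unfold prb
  refine Finset.sum_congr rfl fun ω _ => ?_
  by_cases hA : A' ω
  · rw [if_pos ((h ω).mpr hA), if_pos hA]
  · rw [if_neg (fun c => hA ((h ω).mp c)), if_neg hA]

lemma eiv_congr (p : Ω → ℝ) (f : Ω → ℝ) {A A' : Ω → Prop} (h : ∀ ω, A ω ↔ A' ω) :
    eiv p f A = eiv p f A' := by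
  unfold eiv
  refine Finset.sum_congr rfl fun ω _ => ?_
  by_cases hA : A' ω
  · rw [if_pos ((h ω).mpr hA), if_pos hA]
  · rw [if_neg (fun c => hA ((h ω).mp c)), if_neg hA]

lemma prb_of_false (p : Ω → ℝ) {A : Ω → Prop} (h : ∀ ω, ¬ A ω) : prb p A = 0 := by
  unfold prb; exact Finset.sum_eq_zero fun ω _ => if_neg (h ω)

lemma eiv_of_false (p : Ω → ℝ) (f : Ω → ℝ) {A : Ω → Prop} (h : ∀ ω, ¬ A ω) :
    eiv p f A = 0 := by
  unfold eiv; exact Finset.sum_eq_zero fun ω _ => if_neg (h ω)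

lemma exists_of_prb_ne (p : Ω → ℝ) {A : Ω → Prop} (h : prb p A ≠ 0) : ∃ ω, A ω := by
  by_contra hc
  push_neg at hc
  exact h (prb_of_false p hc)

lemma eiv_sub (p : Ω → ℝ) (f g : Ω → ℝ) (A : Ω → Prop) :
    eiv p (fun ω => f ω - g ω) A = eiv p f A - eiv p g A := by
  unfold eiv
  rw [← Finset.sum_sub_distrib]
  refine Finset.sum_congr rfl fun ω _ => ?_
  by_cases hA : A ω <;> simp [hA, mul_sub]

lemma cexp_sub (p : Ω → ℝ) (f g : Ω → ℝ) (A : Ω → Prop) :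
    cexp p (fun ω => f ω - g ω) A = cexp p f A - cexp p g A := by
  unfold cexp; rw [eiv_sub, sub_div]

lemma eiv_fiber {n : ℕ} (p : Ω → ℝ) (Yd : (Fin n → Bool) → Ω → ℝ)
    (D : Ω → Fin n → Bool) (B : Ω → Prop) :
    eiv p (fun ω => Yd (D ω) ω) B
      = ∑ d : Fin n → Bool, eiv p (Yd d) (fun ω => D ω = d ∧ B ω) := by
  unfold eiv
  rw [Finset.sum_comm]
  refine Finset.sum_congr rfl fun ω _ => ?_
  by_cases hB : B ω <;> simp [hB]

lemma cexp_decomp {n : ℕ} (p : Ω → ℝ) (Yd : (Fin n → Bool) → Ω → ℝ)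
    (D : Ω → Fin n → Bool) (Cp B : Ω → Prop)
    (hC : prb p Cp ≠ 0) (hB : prb p B ≠ 0)
    (hunc : ∀ d, eiv p (Yd d) (fun ω => D ω = d ∧ B ω) * prb p Cp
      = eiv p (Yd d) Cp * prb p (fun ω => D ω = d ∧ B ω)) :
    cexp p (fun ω => Yd (D ω) ω) B
      = ∑ d : Fin n → Bool, cexp p (Yd d) Cp * cpr p (fun ω => D ω = d) B := by
  unfold cexp cpr
  rw [eiv_fiber, Finset.sum_div]
  refine Finset.sum_congr rfl fun d _ => ?_
  have h := hunc d
  field_simp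
  linear_combination h

end AuxLemmas

/-- decomposition lemma: under unconfoundedness and the exposure-mapping
pinning condition, `τ(t,t') = τ*(t,t') + ℛₙ`. -/
theorem stmt3 {Ω : Type*} [Fintype Ω] {n : ℕ} {E : Type*}
    (p : Ω → ℝ) (hp : ∀ ω, 0 ≤ p ω) (hp1 : ∑ ω, p ω = 1)
    (Y : Fin n → (Fin n → Bool) → Ω → ℝ) (D : Ω → Fin n → Bool)
    (C : Fin n → Ω → Prop) (N : Fin n → Finset (Fin n))
    (f : Fin n → (Fin n → Bool) → E) (M : Finset (Fin n))
    (t t' : E) (δ : Fin n → Fin n → Bool)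
    -- `f` is a `K`-neighborhood exposure mapping: it depends on `d` only through `d_{N(i,K)}`
    (hf : ∀ (i : Fin n) (d d' : Fin n → Bool), (∀ j ∈ N i, d j = d' j) → f i d = f i d')
    -- Assumption 2 (pinning): `f(d_{N(i,K)}) = t'` implies `d_{N(i,K)} = δᵢ`
    (hpin : ∀ (i : Fin n) (d : Fin n → Bool), f i d = t' → ∀ j ∈ N i, d j = δ i j)
    -- Assumption 1 (unconfoundedness): `Yᵢ(·) ⊥ D | 𝒞ᵢ`
    (hunc : ∀ (i : Fin n) (d dvec : Fin n → Bool),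
      eiv p (fun ω => Y i d ω) (fun ω => D ω = dvec ∧ C i ω) * prb p (C i) =
        eiv p (fun ω => Y i d ω) (C i) * prb p (fun ω => D ω = dvec ∧ C i ω))
    -- overlap: both exposure events have positive probability within the controls
    (hC : ∀ i ∈ M, 0 < prb p (C i))
    (hposT : ∀ i ∈ M, 0 < prb p (fun ω => f i (D ω) = t ∧ C i ω))
    (hposT' : ∀ i ∈ M, 0 < prb p (fun ω => f i (D ω) = t' ∧ C i ω)) :
    tauE p Y D C f M t t' = tauStarE p Y D C f M N δ t + RnE p Y D C f M N δ t t' := by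
  unfold tauE tauStarE RnE
  rw [← mul_add, ← Finset.sum_add_distrib]
  congr 1
  refine Finset.sum_congr rfl fun i hi => ?_
  have hCi := (hC i hi).ne'
  have hBt := (hposT i hi).ne'
  have hBt' := (hposT' i hi).ne'
  -- unconfoundedness adapted to the exposure events
  have huncB : ∀ (s : E) (d : Fin n → Bool),
      eiv p (fun ω => Y i d ω) (fun ω => D ω = d ∧ (f i (D ω) = s ∧ C i ω)) * prb p (C i)
        = eiv p (fun ω => Y i d ω) (C i)
            * prb p (fun ω => D ω = d ∧ (f i (D ω) = s ∧ C i ω)) := by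
    intro s d
    by_cases hfd : f i d = s
    · have hiff : ∀ ω, (D ω = d ∧ (f i (D ω) = s ∧ C i ω)) ↔ (D ω = d ∧ C i ω) := by
        intro ω
        constructor
        · rintro ⟨h1, _, h3⟩; exact ⟨h1, h3⟩
        · rintro ⟨h1, h3⟩; exact ⟨h1, by rw [h1, hfd], h3⟩
      rw [eiv_congr p _ hiff, prb_congr p hiff]
      exact hunc i d d
    · have hfalse : ∀ ω, ¬ (D ω = d ∧ (f i (D ω) = s ∧ C i ω)) := by
        rintro ω ⟨h1, h2, _⟩
        exact hfd (h1 ▸ h2)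
      rw [eiv_of_false p _ hfalse, prb_of_false p hfalse]
      ring
  have hdec : ∀ s : E, prb p (fun ω => f i (D ω) = s ∧ C i ω) ≠ 0 →
      cexp p (fun ω => Y i (D ω) ω) (fun ω => f i (D ω) = s ∧ C i ω)
        = ∑ d : Fin n → Bool, cexp p (fun ω => Y i d ω) (C i)
            * cpr p (fun ω => D ω = d) (fun ω => f i (D ω) = s ∧ C i ω) := by
    intro s hs
    exact cexp_decomp p (fun d ω => Y i d ω) D (C i) _ hCi hs (huncB s)
  rw [hdec t hBt, hdec t' hBt']
  -- split the cexp of a difference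
  have hts : ∀ d : Fin n → Bool,
      cexp p (fun ω => Y i d ω - Y i (pin N δ i d) ω) (C i)
        = cexp p (fun ω => Y i d ω) (C i) - cexp p (fun ω => Y i (pin N δ i d) ω) (C i) :=
    fun d => cexp_sub p _ _ _
  simp only [hts]
  -- pinned replacement under the t' event
  have hsub : ∑ d : Fin n → Bool, cexp p (fun ω => Y i (pin N δ i d) ω) (C i)
        * cpr p (fun ω => D ω = d) (fun ω => f i (D ω) = t' ∧ C i ω)
      = ∑ d : Fin n → Bool, cexp p (fun ω => Y i d ω) (C i)
        * cpr p (fun ω => D ω = d) (fun ω => f i (D ω) = t' ∧ C i ω) := by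
    refine Finset.sum_congr rfl fun d _ => ?_
    by_cases hv : cpr p (fun ω => D ω = d) (fun ω => f i (D ω) = t' ∧ C i ω) = 0
    · rw [hv]; ring
    · have hnum : prb p (fun ω => D ω = d ∧ (f i (D ω) = t' ∧ C i ω)) ≠ 0 := by
        intro h0
        exact hv (by unfold cpr; rw [h0]; simp)
      obtain ⟨ω, hDω, hfω, _⟩ := exists_of_prb_ne p hnum
      have hfd : f i d = t' := hDω ▸ hfω
      have hpind : pin N δ i d = d := by
        funext j
        unfold pin
        by_cases hj : j ∈ N i
        · rw [if_pos hj, ← hpin i d hfd j hj]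
        · rw [if_neg hj]
      rw [hpind]
  simp only [sub_mul, mul_sub, Finset.sum_sub_distrib]
  rw [hsub]
  ring
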